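/- Suppose p > 1 and a best-worst method matrix on n ≥ 3 alternatives satisfies: a_{Bk} ≥ p for all k ≠ B, a_{kW} ≥ p (equivalently a_{Wk} ≤ 1/p) for all k ≠ W, and every entry is at most p^3. Then the logarithmic least squares priority vector w (with w_i = exp(y_i), y the unique normalized LLSM solution) satisfies w_B ≥ w_j and w_j ≥ w_W for every alternative j; i.e., there is no ordinal violation. -/

import Mathlib

open Finset

/-- Theorem 1 of the paper: if `a_{Bk} ≥ p` for all `k ≠ B`,
`a_{kW} ≥ p` for all `k ≠ W`, and every (known) entry is at most `p^3`,
then the LLSM priorities `w_i = exp y_i` contain no ordinal violation: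
`w_B ≥ w_j` and `w_j ≥ w_W` for every alternative `j`. -/
theorem bwm_llsm_no_ordinal_violation (n : ℕ) (hn : 3 ≤ n) (p : ℝ) (hp : 1 < p)
    (B W : Fin n) (hBW : B ≠ W)
    (a : Fin n → Fin n → ℝ)
    (hpos : ∀ i j : Fin n, (i = B ∨ i = W ∨ j = B ∨ j = W) → 0 < a i j)
    (hdiag : ∀ i, a i i = 1)
    (hrec : ∀ i j : Fin n, (i = B ∨ i = W ∨ j = B ∨ j = W) → a i j * a j i = 1)
    (hB : ∀ k, k ≠ B → p ≤ a B k)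
    (hW : ∀ k, k ≠ W → p ≤ a k W)
    (hub : ∀ i j : Fin n, (i = B ∨ i = W ∨ j = B ∨ j = W) → a i j ≤ p ^ 3)
    (y : Fin n → ℝ)
    (hyB : (n : ℝ) * y B = Real.log (∏ k, a B k))
    (hyW : (n : ℝ) * y W = Real.log (∏ k, a W k))
    (hyj : ∀ j, j ≠ B → j ≠ W → 2 * y j - y B - y W = Real.log (a j B * a j W))
    (hnorm : ∑ i, y i = 0)
    (w : Fin n → ℝ) (hw : ∀ i, w i = Real.exp (y i)) :
    ∀ j, w j ≤ w B ∧ w W ≤ w j := by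
  have hp0 : (0:ℝ) < p := lt_trans one_pos hp
  have hLp : 0 < Real.log p := Real.log_pos hp
  set Lp := Real.log p with hLpdef
  have hn3 : (3:ℝ) ≤ (n:ℝ) := by exact_mod_cast hn
  have hnpos : (0:ℝ) < (n:ℝ) := by linarith
  have haB : ∀ k, 0 < a B k := fun k => hpos B k (Or.inl rfl)
  have haW : ∀ k, 0 < a W k := fun k => hpos W k (Or.inr (Or.inl rfl))
  have hakW : ∀ k, 0 < a k W := fun k => hpos k W (Or.inr (Or.inr (Or.inr rfl)))
  have hakB : ∀ k, 0 < a k B := fun k => hpos k B (Or.inr (Or.inr (Or.inl rfl)))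
  -- log reciprocity
  have hlogW : ∀ k, Real.log (a W k) = - Real.log (a k W) := by
    intro k
    have h := hrec k W (Or.inr (Or.inr (Or.inr rfl)))
    have h2 := Real.log_mul (hakW k).ne' (haW k).ne'
    rw [h, Real.log_one] at h2
    linarith
  have hlogB : ∀ k, Real.log (a k B) = - Real.log (a B k) := by
    intro k
    have h := hrec B k (Or.inl rfl)
    have h2 := Real.log_mul (haB k).ne' (hakB k).ne'
    rw [h, Real.log_one] at h2
    linarith
  -- the key sum
  set c : Fin n → ℝ := fun k => Real.log (a B k) + Real.log (a k W) with hcdef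
  set S : ℝ := ∑ k, c k with hSdef
  have hSeq : (n:ℝ) * y B - (n:ℝ) * y W = S := by
    rw [hyB, hyW, Real.log_prod (fun k _ => (haB k).ne'),
        Real.log_prod (fun k _ => (haW k).ne'), hSdef, ← Finset.sum_sub_distrib]
    refine Finset.sum_congr rfl fun k _ => ?_
    rw [hcdef]
    simp only [hlogW k]
    ring
  -- basic log bounds
  have hlbB : ∀ k, k ≠ B → Lp ≤ Real.log (a B k) := fun k hk =>
    Real.log_le_log hp0 (hB k hk)
  have hlbW : ∀ k, k ≠ W → Lp ≤ Real.log (a k W) := fun k hk =>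
    Real.log_le_log hp0 (hW k hk)
  have hubB : ∀ k, Real.log (a B k) ≤ 3 * Lp := by
    intro k
    have h := Real.log_le_log (haB k) (hub B k (Or.inl rfl))
    rwa [Real.log_pow, Nat.cast_ofNat] at h
  have hubW : ∀ k, Real.log (a k W) ≤ 3 * Lp := by
    intro k
    have h := Real.log_le_log (hakW k) (hub k W (Or.inr (Or.inr (Or.inr rfl))))
    rwa [Real.log_pow, Nat.cast_ofNat] at h
  have hlbBW : Lp ≤ Real.log (a B W) := hlbB W (Ne.symm hBW)
  -- lower bound on S, keeping the j-th term exact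
  have hSlb : ∀ j, j ≠ B → j ≠ W →
      Real.log (a B j) + Real.log (a j W) + 2 * Real.log (a B W)
        + 2 * ((n:ℝ) - 3) * Lp ≤ S := by
    intro j hjB hjW
    set t : Finset (Fin n) := {B, W, j} with htdef
    have hBt : B ∉ ({W, j} : Finset (Fin n)) := by
      simp [hBW, Ne.symm hjB]
    have hWt : W ∉ ({j} : Finset (Fin n)) := by
      simp [Ne.symm hjW]
    have htcard : t.card = 3 := by
      rw [htdef, Finset.card_insert_of_notMem hBt, Finset.card_insert_of_notMem hWt,
        Finset.card_singleton]
    have hsplit : ∑ k ∈ Finset.univ \ t, c k + ∑ k ∈ t, c k = S :=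
      Finset.sum_sdiff (Finset.subset_univ t)
    have hts : ∑ k ∈ t, c k = c B + c W + c j := by
      rw [htdef, Finset.sum_insert hBt, Finset.sum_insert hWt, Finset.sum_singleton]
      ring
    have hcB : c B = Real.log (a B W) := by
      rw [hcdef]; simp only [hdiag B, Real.log_one]; ring
    have hcW : c W = Real.log (a B W) := by
      rw [hcdef]; simp only [hdiag W, Real.log_one]; ring
    have hlow : ∀ k ∈ Finset.univ \ t, 2 * Lp ≤ c k := by
      intro k hk
      rw [htdef] at hk
      simp only [Finset.mem_sdiff, Finset.mem_univ, Finset.mem_insert,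
        Finset.mem_singleton, true_and, not_or] at hk
      have h1 := hlbB k hk.1
      have h2 := hlbW k hk.2.1
      rw [hcdef]
      dsimp only
      linarith
    have hsum := Finset.card_nsmul_le_sum (Finset.univ \ t) c (2 * Lp) hlow
    have hcard2 : (Finset.univ \ t).card = n - 3 := by
      rw [Finset.card_sdiff_of_subset (Finset.subset_univ t), Finset.card_univ,
        Fintype.card_fin, htcard]
    rw [hcard2, nsmul_eq_mul] at hsum
    have hcast : ((n - 3 : ℕ) : ℝ) = (n:ℝ) - 3 := by
      push_cast [hn]; ring
    rw [hcast] at hsum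
    have hcj : c j = Real.log (a B j) + Real.log (a j W) := rfl
    linarith
  -- helper: divide by n
  have key : ∀ u v : ℝ, 0 ≤ (n:ℝ) * (u - v) → v ≤ u := by
    intro u v h
    by_contra hc
    push_neg at hc
    nlinarith [mul_pos hnpos (sub_pos.mpr hc)]
  -- the middle equation scaled by n
  have hmid : ∀ j, j ≠ B → j ≠ W →
      (n:ℝ) * (2 * y j - y B - y W)
        = (n:ℝ) * (Real.log (a j W) - Real.log (a B j)) := by
    intro j hjB hjW
    have h := hyj j hjB hjW
    rw [Real.log_mul (hakB j).ne' (hakW j).ne', hlogB j] at h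
    rw [h]; ring
  -- main inequalities for j ≠ B, W
  have main1 : ∀ j, j ≠ B → j ≠ W → y j ≤ y B := by
    intro j hjB hjW
    have hS := hSlb j hjB hjW
    have hm := hmid j hjB hjW
    have hb1 := hlbB j hjB
    have hb2 := hlbW j hjW
    have hb3 := hubB j
    have hb4 := hubW j
    apply key
    nlinarith [mul_nonneg (show (0:ℝ) ≤ (n:ℝ) - 1 by linarith)
        (show (0:ℝ) ≤ 3 * Lp - Real.log (a j W) by linarith),
      mul_nonneg (show (0:ℝ) ≤ (n:ℝ) + 1 by linarith)
        (show (0:ℝ) ≤ Real.log (a B j) - Lp by linarith)]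
  have main2 : ∀ j, j ≠ B → j ≠ W → y W ≤ y j := by
    intro j hjB hjW
    have hS := hSlb j hjB hjW
    have hm := hmid j hjB hjW
    have hb1 := hlbB j hjB
    have hb2 := hlbW j hjW
    have hb3 := hubB j
    have hb4 := hubW j
    apply key
    nlinarith [mul_nonneg (show (0:ℝ) ≤ (n:ℝ) - 1 by linarith)
        (show (0:ℝ) ≤ 3 * Lp - Real.log (a B j) by linarith),
      mul_nonneg (show (0:ℝ) ≤ (n:ℝ) + 1 by linarith)
        (show (0:ℝ) ≤ Real.log (a j W) - Lp by linarith)]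
  -- find some j0 ≠ B, W
  have hex : ∃ j0 : Fin n, j0 ≠ B ∧ j0 ≠ W := by
    have hcard : ((Finset.univ : Finset (Fin n)) \ {B, W}).card = n - 2 := by
      rw [Finset.card_sdiff_of_subset (Finset.subset_univ _), Finset.card_univ, Fintype.card_fin,
        Finset.card_insert_of_notMem (by simp [hBW]), Finset.card_singleton]
    have hpos' : 0 < ((Finset.univ : Finset (Fin n)) \ {B, W}).card := by
      rw [hcard]; omega
    obtain ⟨j0, hj0⟩ := Finset.card_pos.mp hpos'
    simp only [Finset.mem_sdiff, Finset.mem_univ, Finset.mem_insert,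
      Finset.mem_singleton, true_and, not_or] at hj0
    exact ⟨j0, hj0.1, hj0.2⟩
  obtain ⟨j0, hj0B, hj0W⟩ := hex
  have hWB : y W ≤ y B := le_trans (main2 j0 hj0B hj0W) (main1 j0 hj0B hj0W)
  -- conclude
  intro j
  rw [hw j, hw B, hw W]
  constructor
  · apply Real.exp_le_exp.mpr
    by_cases hjB : j = B
    · rw [hjB]
    · by_cases hjW : j = W
      · rw [hjW]; exact hWB
      · exact main1 j hjB hjW
  · apply Real.exp_le_exp.mpr
    by_cases hjB : j = B
    · rw [hjB]; exact hWB
    · by_cases hjW : j = W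
      · rw [hjW]
      · exact main2 j hjB hjW
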